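/- arXiv:2601.18770 — 6 statements merged into one kernel-verified Lean document; each statement's English description precedes it below -/
import Mathlib

section
/- Let X be an n×k real matrix of rank k (n > k), Z an n×(n−k) matrix with XᵀZ = 0 and rank(Z) = n−k, and Ω an n×n positive definite matrix. Then Ω can be written as Ω = XΓXᵀ + ZΔZᵀ + XΞZᵀ + ZΞᵀXᵀ for some positive definite k×k matrix Γ, positive definite (n−k)×(n−k) matrix Δ, and k×(n−k) matrix Ξ. -/
open Matrix

/-- A matrix with full column rank has injective `mulVec`. -/
lemma aux_inj_of_rank {m r : ℕ} (A : Matrix (Fin m) (Fin r) ℝ) (hA : A.rank = r) :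
    Function.Injective A.mulVec := by
  have h := A.mulVecLin.finrank_range_add_finrank_ker
  rw [Matrix.rank] at hA
  rw [hA, Module.finrank_fintype_fun_eq_card, Fintype.card_fin] at h
  have hker : Module.finrank ℝ (LinearMap.ker A.mulVecLin) = 0 := by omega
  have : LinearMap.ker A.mulVecLin = ⊥ := Submodule.finrank_eq_zero.mp hker
  have := LinearMap.ker_eq_bot.mp this
  exact fun a b hab => this (by simpa [Matrix.mulVecLin_apply] using hab)

/-- Congruence by an invertible matrix preserves positive definiteness (real case). -/
lemma aux_posdef_conj {m : Type*} [Fintype m] [DecidableEq m]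
    {A B : Matrix m m ℝ} (hA : A.PosDef) (hB : IsUnit B) : (B * A * Bᵀ).PosDef := by
  have hBt : IsUnit Bᵀ := by
    rw [Matrix.isUnit_iff_isUnit_det, Matrix.det_transpose, ← Matrix.isUnit_iff_isUnit_det]
    exact hB
  refine Matrix.PosDef.of_dotProduct_mulVec_pos ?_ ?_
  · have h1 : Aᴴ = A := hA.isHermitian
    show (B * A * Bᵀ)ᴴ = B * A * Bᵀ
    rw [conjTranspose_mul, conjTranspose_mul, h1]
    simp [Matrix.mul_assoc]
  · intro x hx
    have hy : Bᵀ *ᵥ x ≠ 0 := by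
      intro h
      exact hx (Matrix.mulVec_injective_iff_isUnit.mpr hBt (by simpa using h))
    have := hA.dotProduct_mulVec_pos hy
    have hrw : star x ⬝ᵥ (B * A * Bᵀ) *ᵥ x = star (Bᵀ *ᵥ x) ⬝ᵥ A *ᵥ (Bᵀ *ᵥ x) := by
      rw [← Matrix.mulVec_mulVec, ← Matrix.mulVec_mulVec, Matrix.dotProduct_mulVec _ B,
        Matrix.star_mulVec]
      simp
    rw [hrw]
    exact this

/-- Reindexing by an equivalence preserves positive definiteness. -/
lemma aux_posdef_submatrix {m l : Type*} [Fintype m] [Fintype l]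
    {A : Matrix m m ℝ} (hA : A.PosDef) (e : l ≃ m) : (A.submatrix e e).PosDef := by
  refine Matrix.PosDef.of_dotProduct_mulVec_pos (hA.posSemidef.submatrix e).isHermitian ?_
  intro x hx
  have hx' : x ∘ e.symm ≠ 0 := by
    intro h
    apply hx
    funext i
    have := congrFun h (e i)
    simpa using this
  have := hA.dotProduct_mulVec_pos hx'
  rw [Matrix.submatrix_mulVec_equiv]
  calc star x ⬝ᵥ ((A *ᵥ (x ∘ e.symm)) ∘ e)
      = star (x ∘ e.symm) ⬝ᵥ (A *ᵥ (x ∘ e.symm)) := by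
        simp only [dotProduct]
        exact Fintype.sum_equiv e _ _ (fun i => by simp)
    _ > 0 := this

theorem stmt_0 (n k : ℕ) (hnk : k < n)
    (X : Matrix (Fin n) (Fin k) ℝ) (hX : X.rank = k)
    (Z : Matrix (Fin n) (Fin (n - k)) ℝ) (hXZ : Xᵀ * Z = 0) (hZ : Z.rank = n - k)
    (Ω : Matrix (Fin n) (Fin n) ℝ) (hΩ : Ω.PosDef) :
    ∃ (Γ : Matrix (Fin k) (Fin k) ℝ) (Δ : Matrix (Fin (n - k)) (Fin (n - k)) ℝ)
      (Ξ : Matrix (Fin k) (Fin (n - k)) ℝ), Γ.PosDef ∧ Δ.PosDef ∧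
      Ω = X * Γ * Xᵀ + Z * Δ * Zᵀ + X * Ξ * Zᵀ + Z * Ξᵀ * Xᵀ := by
  -- injectivity of X and Z
  have hXinj : Function.Injective X.mulVec := aux_inj_of_rank X hX
  have hZinj : Function.Injective Z.mulVec := aux_inj_of_rank Z hZ
  have hXtX : Function.Injective (Xᵀ * X).mulVec := by
    apply aux_inj_of_rank
    rw [Matrix.rank_transpose_mul_self]; exact hX
  have hZtZ : Function.Injective (Zᵀ * Z).mulVec := by
    apply aux_inj_of_rank
    rw [Matrix.rank_transpose_mul_self]; exact hZ
  -- the equivalence and the square matrix W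
  let e : Fin k ⊕ Fin (n - k) ≃ Fin n :=
    finSumFinEquiv.trans (finCongr (Nat.add_sub_cancel' hnk.le))
  set C : Matrix (Fin n) (Fin k ⊕ Fin (n - k)) ℝ := fromCols X Z with hC
  set W : Matrix (Fin n) (Fin n) ℝ := C.submatrix id ⇑e.symm with hW
  -- W is invertible
  have hWinj : Function.Injective W.mulVec := by
    intro v w hvw
    have key : ∀ v : Fin n → ℝ, W *ᵥ v = 0 → v = 0 := by
      intro v hv
      rw [hW, Matrix.submatrix_mulVec_equiv] at hv
      have hv2 : C *ᵥ (v ∘ ⇑e.symm.symm) = 0 := by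
        funext i
        exact congrFun hv i
      rw [hC] at hv2
      have hsplit : (v ∘ ⇑e.symm.symm) =
          Sum.elim ((v ∘ ⇑e) ∘ Sum.inl) ((v ∘ ⇑e) ∘ Sum.inr) := by
        funext i; cases i <;> simp
      rw [hsplit, fromCols_mulVec_sumElim] at hv2
      set a := (v ∘ ⇑e) ∘ Sum.inl
      set b := (v ∘ ⇑e) ∘ Sum.inr
      have ha : a = 0 := by
        apply hXtX
        have : Xᵀ *ᵥ (X *ᵥ a + Z *ᵥ b) = 0 := by rw [hv2]; simp
        rw [Matrix.mulVec_add, Matrix.mulVec_mulVec, Matrix.mulVec_mulVec, hXZ] at this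
        simpa using this
      have hb : b = 0 := by
        apply hZinj
        have hz : Z *ᵥ b = 0 := by
          have := hv2
          rw [ha] at this
          simpa using this
        simpa using hz
      funext i
      have : v (e (e.symm i)) = 0 := by
        rcases h : e.symm i with j | j
        · have := congrFun ha j
          simpa [a, h] using this
        · have := congrFun hb j
          simpa [b, h] using this
      simpa using this
    have : W *ᵥ (v - w) = 0 := by
      rw [Matrix.mulVec_sub, hvw, sub_self]
    have := key _ this
    exact sub_eq_zero.mp this
  have hWunit : IsUnit W := Matrix.mulVec_injective_iff_isUnit.mp hWinj
  have hWinv : IsUnit W⁻¹ := Matrix.isUnit_nonsing_inv_iff.mpr hWunit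
  haveI := hWunit.invertible
  -- M := W⁻¹ Ω W⁻ᵀ is posdef and Ω = W M Wᵀ
  set M : Matrix (Fin n) (Fin n) ℝ := W⁻¹ * Ω * W⁻¹ᵀ with hM
  have hMpd : M.PosDef := aux_posdef_conj hΩ hWinv
  have hΩeq : Ω = W * M * Wᵀ := by
    rw [hM]
    rw [show W * (W⁻¹ * Ω * W⁻¹ᵀ) * Wᵀ = (W * W⁻¹) * Ω * (W⁻¹ᵀ * Wᵀ) by
      simp only [Matrix.mul_assoc]]
    rw [← Matrix.transpose_mul, Matrix.mul_inv_of_invertible]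
    simp
  -- blocks of the reindexed M
  set N : Matrix (Fin k ⊕ Fin (n - k)) (Fin k ⊕ Fin (n - k)) ℝ := M.submatrix ⇑e ⇑e with hN
  have hNpd : N.PosDef := aux_posdef_submatrix hMpd e
  refine ⟨N.toBlocks₁₁, N.toBlocks₂₂, N.toBlocks₁₂, ?_, ?_, ?_⟩
  · -- Γ posdef
    refine Matrix.PosDef.of_dotProduct_mulVec_pos ?_ ?_
    · have h := hNpd.isHermitian
      ext i j
      have := congrFun (congrFun h (Sum.inl i)) (Sum.inl j)
      simpa [Matrix.toBlocks₁₁, Matrix.conjTranspose_apply] using this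
    · intro x hx
      have hx' : (Sum.elim x 0 : Fin k ⊕ Fin (n - k) → ℝ) ≠ 0 := by
        intro h
        apply hx
        funext i
        exact congrFun h (Sum.inl i)
      have := hNpd.dotProduct_mulVec_pos hx'
      rw [show (N = fromBlocks N.toBlocks₁₁ N.toBlocks₁₂ N.toBlocks₂₁ N.toBlocks₂₂) from
        (Matrix.fromBlocks_toBlocks N).symm, Matrix.fromBlocks_mulVec] at this
      simpa [sumElim_dotProduct_sumElim] using this
  · -- Δ posdef
    refine Matrix.PosDef.of_dotProduct_mulVec_pos ?_ ?_
    · have h := hNpd.isHermitian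
      ext i j
      have := congrFun (congrFun h (Sum.inr i)) (Sum.inr j)
      simpa [Matrix.toBlocks₂₂, Matrix.conjTranspose_apply] using this
    · intro x hx
      have hx' : (Sum.elim 0 x : Fin k ⊕ Fin (n - k) → ℝ) ≠ 0 := by
        intro h
        apply hx
        funext i
        exact congrFun h (Sum.inr i)
      have := hNpd.dotProduct_mulVec_pos hx'
      rw [show (N = fromBlocks N.toBlocks₁₁ N.toBlocks₁₂ N.toBlocks₂₁ N.toBlocks₂₂) from
        (Matrix.fromBlocks_toBlocks N).symm, Matrix.fromBlocks_mulVec] at this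
      simpa [sumElim_dotProduct_sumElim] using this
  · -- the decomposition
    have h21 : N.toBlocks₂₁ = N.toBlocks₁₂ᵀ := by
      have h := hNpd.isHermitian
      ext i j
      have := congrFun (congrFun h (Sum.inl j)) (Sum.inr i)
      simpa [Matrix.toBlocks₂₁, Matrix.toBlocks₁₂, Matrix.conjTranspose_apply] using this
    have hWM : W * M * Wᵀ = C * N * Cᵀ := by
      have hMsub : M = N.submatrix ⇑e.symm ⇑e.symm := by
        rw [hN]; simp
      have hWt : Wᵀ = Cᵀ.submatrix ⇑e.symm id := by
        rw [hW]; rfl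
      rw [hW, hMsub, hWt, Matrix.submatrix_mul_equiv, Matrix.submatrix_mul_equiv]
      simp
    rw [hΩeq, hWM, hC,
      show (N = fromBlocks N.toBlocks₁₁ N.toBlocks₁₂ N.toBlocks₂₁ N.toBlocks₂₂) from
        (Matrix.fromBlocks_toBlocks N).symm,
      Matrix.transpose_fromCols, Matrix.fromCols_mul_fromBlocks,
      Matrix.fromCols_mul_fromRows, h21]
    simp only [Matrix.add_mul, Matrix.mul_assoc, Matrix.toBlocks_fromBlocks₁₁,
      Matrix.toBlocks_fromBlocks₁₂, Matrix.toBlocks_fromBlocks₂₁, Matrix.toBlocks_fromBlocks₂₂]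
    abel
end

section
/- Let X be an n×k real matrix of rank k, Z an n×(n−k) matrix with XᵀZ = 0 and rank(Z) = n−k, and Ω positive definite. Then Ω = XΓXᵀ + ZΔZᵀ for some positive definite Γ and Δ if and only if XᵀΩZ = 0. -/
open Matrix Module Submodule LinearMap

private lemma real_conjT {m k : Type*} (C : Matrix m k ℝ) : Cᴴ = Cᵀ := by
  ext i j; simp [conjTranspose_apply]

private lemma posDef_conj' {m k : Type*} [Fintype m] [Fintype k]
    {Ω : Matrix m m ℝ} (hΩ : Ω.PosDef)
    (C : Matrix m k ℝ) (hC : ∀ x, C *ᵥ x = 0 → x = 0) :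
    (Cᵀ * Ω * C).PosDef := by
  rw [posDef_iff_dotProduct_mulVec]
  constructor
  · have h := isHermitian_conjTranspose_mul_mul C hΩ.1
    rwa [real_conjT] at h
  · intro x hx
    have hcx : C *ᵥ x ≠ 0 := fun h => hx (hC x h)
    have key : dotProduct (star x) ((Cᵀ * Ω * C) *ᵥ x)
        = dotProduct (star (C *ᵥ x)) (Ω *ᵥ (C *ᵥ x)) := by
      rw [show star x = x by ext i; simp, show star (C *ᵥ x) = C *ᵥ x by ext i; simp,
        ← mulVec_mulVec, ← mulVec_mulVec, dotProduct_mulVec, vecMul_transpose]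
    rw [key]
    exact hΩ.dotProduct_mulVec_pos hcx

private lemma inj_of_rank {n k : ℕ} (X : Matrix (Fin n) (Fin k) ℝ) (hX : X.rank = k) :
    ∀ v, X *ᵥ v = 0 → v = 0 := by
  have hX' : finrank ℝ (LinearMap.range X.mulVecLin) = k := hX
  have h := LinearMap.finrank_range_add_finrank_ker X.mulVecLin
  rw [hX', finrank_fin_fun] at h
  have hker : LinearMap.ker X.mulVecLin = ⊥ := Submodule.finrank_eq_zero.mp (by omega)
  intro v hv
  have : v ∈ LinearMap.ker X.mulVecLin := by
    simpa [LinearMap.mem_ker, mulVecLin_apply] using hv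
  rw [hker] at this
  simpa using this

theorem stmt_1 (n k : ℕ) (hnk : k < n)
    (X : Matrix (Fin n) (Fin k) ℝ) (hX : X.rank = k)
    (Z : Matrix (Fin n) (Fin (n - k)) ℝ) (hXZ : Xᵀ * Z = 0) (hZ : Z.rank = n - k)
    (Ω : Matrix (Fin n) (Fin n) ℝ) (hΩ : Ω.PosDef) :
    (∃ (Γ : Matrix (Fin k) (Fin k) ℝ) (Δ : Matrix (Fin (n - k)) (Fin (n - k)) ℝ),
      Γ.PosDef ∧ Δ.PosDef ∧ Ω = X * Γ * Xᵀ + Z * Δ * Zᵀ) ↔ Xᵀ * Ω * Z = 0 := by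
  have hΩsymm : Ωᵀ = Ω := by
    have := hΩ.1
    ext i j
    simpa [conjTranspose_apply] using congrFun (congrFun this i) j
  constructor
  · rintro ⟨Γ, Δ, hΓ, hΔ, rfl⟩
    rw [Matrix.mul_add, Matrix.add_mul]
    have t1 : Xᵀ * (X * Γ * Xᵀ) * Z = Xᵀ * X * (Γ * (Xᵀ * Z)) := by
      simp only [Matrix.mul_assoc]
    have t2 : Xᵀ * (Z * Δ * Zᵀ) * Z = (Xᵀ * Z) * (Δ * (Zᵀ * Z)) := by
      simp only [Matrix.mul_assoc]
    rw [t1, t2, hXZ]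
    simp
  · intro h
    -- injectivity
    have hXinj := inj_of_rank X hX
    have hZinj := inj_of_rank Z hZ
    -- Gram matrices
    set A := Xᵀ * X with hA
    set B := Zᵀ * Z with hBdef
    have hApd : A.PosDef := by
      have := posDef_conj' (Matrix.PosDef.one : (1 : Matrix (Fin n) (Fin n) ℝ).PosDef) X hXinj
      simpa using this
    have hBpd : B.PosDef := by
      have := posDef_conj' (Matrix.PosDef.one : (1 : Matrix (Fin n) (Fin n) ℝ).PosDef) Z hZinj
      simpa using this
    have hAdet : IsUnit A.det := hApd.det_pos.ne'.isUnit
    have hBdet : IsUnit B.det := hBpd.det_pos.ne'.isUnit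
    have hAinv : A * A⁻¹ = 1 := Matrix.mul_nonsing_inv A hAdet
    have hBinv : B * B⁻¹ = 1 := Matrix.mul_nonsing_inv B hBdet
    -- projections
    set P := X * A⁻¹ * Xᵀ with hPdef
    set Q := Z * B⁻¹ * Zᵀ with hQdef
    -- X A⁻¹ injective, Z B⁻¹ injective
    have hXAinj : ∀ x, (X * A⁻¹) *ᵥ x = 0 → x = 0 := by
      intro x hx
      rw [← mulVec_mulVec] at hx
      have h2 : A⁻¹ *ᵥ x = 0 := hXinj _ hx
      have h3 : A *ᵥ (A⁻¹ *ᵥ x) = 0 := by rw [h2]; simp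
      rwa [mulVec_mulVec, hAinv, one_mulVec] at h3
    have hZBinj : ∀ x, (Z * B⁻¹) *ᵥ x = 0 → x = 0 := by
      intro x hx
      rw [← mulVec_mulVec] at hx
      have h2 : B⁻¹ *ᵥ x = 0 := hZinj _ hx
      have h3 : B *ᵥ (B⁻¹ *ᵥ x) = 0 := by rw [h2]; simp
      rwa [mulVec_mulVec, hBinv, one_mulVec] at h3
    -- spanning: range X ⊔ range Z = ⊤
    have hZXT : Zᵀ * X = 0 := by
      have := congrArg Matrix.transpose hXZ
      simpa using this
    have htop : LinearMap.range X.mulVecLin ⊔ LinearMap.range Z.mulVecLin = ⊤ := by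
      have hdisj : LinearMap.range X.mulVecLin ⊓ LinearMap.range Z.mulVecLin = ⊥ := by
        rw [Submodule.eq_bot_iff]
        rintro u hu
        obtain ⟨hu1, hu2⟩ := Submodule.mem_inf.mp hu
        obtain ⟨a, ha⟩ := hu1
        obtain ⟨b, hb⟩ := hu2
        simp only [mulVecLin_apply] at ha hb
        have hz : dotProduct u u = 0 := by
          nth_rewrite 1 [← ha]
          nth_rewrite 1 [← hb]
          rw [dotProduct_mulVec, ← vecMul_transpose, vecMul_vecMul, hXZ]
          simp
        exact (dotProduct_self_eq_zero).mp hz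
      have hsum := Submodule.finrank_sup_add_finrank_inf_eq
        (LinearMap.range X.mulVecLin) (LinearMap.range Z.mulVecLin)
      rw [hdisj] at hsum
      have hX' : finrank ℝ (LinearMap.range X.mulVecLin) = k := hX
      have hZ' : finrank ℝ (LinearMap.range Z.mulVecLin) = n - k := hZ
      rw [hX', hZ', finrank_bot, add_zero] at hsum
      apply Submodule.eq_top_of_finrank_eq
      rw [hsum, finrank_fin_fun]
      omega
    -- P + Q = 1
    have hXP : Xᵀ * P = Xᵀ := by
      rw [hPdef, ← Matrix.mul_assoc, ← Matrix.mul_assoc, ← hA, Matrix.mul_assoc A, ]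
      rw [show A * (A⁻¹ * Xᵀ) = (A * A⁻¹) * Xᵀ from (Matrix.mul_assoc _ _ _).symm, hAinv,
        Matrix.one_mul]
    have hZQ : Zᵀ * Q = Zᵀ := by
      rw [hQdef, ← Matrix.mul_assoc, ← Matrix.mul_assoc, ← hBdef, Matrix.mul_assoc B]
      rw [show B * (B⁻¹ * Zᵀ) = (B * B⁻¹) * Zᵀ from (Matrix.mul_assoc _ _ _).symm, hBinv,
        Matrix.one_mul]
    have hXQ : Xᵀ * Q = 0 := by
      rw [hQdef, ← Matrix.mul_assoc, ← Matrix.mul_assoc, hXZ]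
      simp
    have hZP : Zᵀ * P = 0 := by
      rw [hPdef, ← Matrix.mul_assoc, ← Matrix.mul_assoc, hZXT]
      simp
    have hPQ1 : P + Q = 1 := by
      set M := (1 : Matrix (Fin n) (Fin n) ℝ) - P - Q with hMdef
      have hXM : Xᵀ * M = 0 := by
        rw [hMdef, Matrix.mul_sub, Matrix.mul_sub, hXP, hXQ, Matrix.mul_one]
        simp
      have hZM : Zᵀ * M = 0 := by
        rw [hMdef, Matrix.mul_sub, Matrix.mul_sub, hZP, hZQ, Matrix.mul_one]
        simp
      have hMX : Mᵀ * X = 0 := by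
        have := congrArg Matrix.transpose hXM
        simpa using this
      have hMZ : Mᵀ * Z = 0 := by
        have := congrArg Matrix.transpose hZM
        simpa using this
      have hMv : ∀ u : Fin n → ℝ, Mᵀ *ᵥ u = 0 := by
        intro u
        have hu : u ∈ LinearMap.range X.mulVecLin ⊔ LinearMap.range Z.mulVecLin := by
          rw [htop]; trivial
        obtain ⟨y, hy, z, hz, rfl⟩ := Submodule.mem_sup.mp hu
        obtain ⟨a, rfl⟩ := hy
        obtain ⟨b, rfl⟩ := hz
        simp only [mulVecLin_apply]
        rw [mulVec_add, mulVec_mulVec, mulVec_mulVec, hMX, hMZ]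
        simp
      have hMT : Mᵀ = 0 := by
        ext i j
        have := congrFun (hMv (Pi.single j 1)) i
        simpa using this
      have hM0 : M = 0 := by
        have := congrArg Matrix.transpose hMT
        simpa using this
      have : (1 : Matrix (Fin n) (Fin n) ℝ) - (P + Q) = 0 := by
        rw [← sub_sub]; exact hM0
      linear_combination (norm := abel) -this
    -- construct Γ and Δ
    refine ⟨A⁻¹ * (Xᵀ * Ω * X) * A⁻¹, B⁻¹ * (Zᵀ * Ω * Z) * B⁻¹, ?_, ?_, ?_⟩
    · have hAinvsymm : (A⁻¹)ᵀ = A⁻¹ := by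
        rw [Matrix.transpose_nonsing_inv]
        congr 1
        have := hApd.1
        ext i j
        simpa [conjTranspose_apply] using congrFun (congrFun this i) j
      have := posDef_conj' hΩ (X * A⁻¹) hXAinj
      rw [Matrix.transpose_mul, hAinvsymm] at this
      simpa only [Matrix.mul_assoc] using this
    · have hBinvsymm : (B⁻¹)ᵀ = B⁻¹ := by
        rw [Matrix.transpose_nonsing_inv]
        congr 1
        have := hBpd.1
        ext i j
        simpa [conjTranspose_apply] using congrFun (congrFun this i) j
      have := posDef_conj' hΩ (Z * B⁻¹) hZBinj
      rw [Matrix.transpose_mul, hBinvsymm] at this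
      simpa only [Matrix.mul_assoc] using this
    · have hZΩX : Zᵀ * Ω * X = 0 := by
        have := congrArg Matrix.transpose h
        simpa [Matrix.transpose_mul, hΩsymm, Matrix.mul_assoc] using this
      have e1 : X * (A⁻¹ * (Xᵀ * Ω * X) * A⁻¹) * Xᵀ = P * Ω * P := by
        simp only [hPdef, Matrix.mul_assoc]
      have e2 : Z * (B⁻¹ * (Zᵀ * Ω * Z) * B⁻¹) * Zᵀ = Q * Ω * Q := by
        simp only [hQdef, Matrix.mul_assoc]
      have hPΩQ : P * Ω * Q = 0 := by
        have : P * Ω * Q = X * A⁻¹ * (Xᵀ * Ω * Z) * (B⁻¹ * Zᵀ) := by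
          simp only [hPdef, hQdef, Matrix.mul_assoc]
        rw [this, h]
        simp
      have hQΩP : Q * Ω * P = 0 := by
        have : Q * Ω * P = Z * B⁻¹ * (Zᵀ * Ω * X) * (A⁻¹ * Xᵀ) := by
          simp only [hPdef, hQdef, Matrix.mul_assoc]
        rw [this, hZΩX]
        simp
      rw [e1, e2]
      have expand : (P + Q) * Ω * (P + Q) = P * Ω * P + P * Ω * Q + Q * Ω * P + Q * Ω * Q := by
        simp only [Matrix.add_mul, Matrix.mul_add]
        abel
      rw [hPQ1] at expand
      rw [Matrix.one_mul, Matrix.mul_one] at expand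
      nth_rewrite 1 [expand]
      rw [hPΩQ, hQΩP]
      abel
end

section
/- Let X be an n×k real matrix of rank k, Z an n×(n−k) matrix with XᵀZ = 0 and rank(Z) = n−k, and Ω positive definite. Then XᵀΩZ = 0 if and only if XᵀΩ⁻¹Z = 0. -/
open Matrix

private lemma aux_stmt_2 (n k : ℕ) (hnk : k < n)
    (X : Matrix (Fin n) (Fin k) ℝ) (hX : X.rank = k)
    (Z : Matrix (Fin n) (Fin (n - k)) ℝ) (hXZ : Xᵀ * Z = 0) (hZ : Z.rank = n - k)
    (Ω : Matrix (Fin n) (Fin n) ℝ) (hΩ : Ω.PosDef) (h : Xᵀ * Ω * Z = 0) :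
    Xᵀ * Ω⁻¹ * Z = 0 := by
  -- range of Z equals kernel of Xᵀ
  have hle : LinearMap.range Z.mulVecLin ≤ LinearMap.ker (Xᵀ).mulVecLin := by
    rintro _ ⟨y, rfl⟩
    simp only [LinearMap.mem_ker, mulVecLin_apply, mulVec_mulVec, hXZ, zero_mulVec]
  have hrkX : Module.finrank ℝ (LinearMap.range (Xᵀ).mulVecLin) = k := by
    have : (Xᵀ).rank = k := by rw [rank_transpose, hX]
    simpa [Matrix.rank] using this
  have hrn := LinearMap.finrank_range_add_finrank_ker (Xᵀ).mulVecLin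
  simp only [Module.finrank_pi, Fintype.card_fin] at hrn
  have hkerX : Module.finrank ℝ (LinearMap.ker (Xᵀ).mulVecLin) = n - k := by omega
  have hrkZ : Module.finrank ℝ (LinearMap.range Z.mulVecLin) = n - k := by
    simpa [Matrix.rank] using hZ
  have heq : LinearMap.range Z.mulVecLin = LinearMap.ker (Xᵀ).mulVecLin :=
    Submodule.eq_of_le_of_finrank_eq hle (by rw [hrkZ, hkerX])
  -- each column of Ω * Z is Z *ᵥ something
  have hcol : ∀ j, ∃ y, Z.mulVec y = fun i => (Ω * Z) i j := by
    intro j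
    have hmem : (fun i => (Ω * Z) i j) ∈ LinearMap.ker (Xᵀ).mulVecLin := by
      simp only [LinearMap.mem_ker, mulVecLin_apply]
      funext l
      have : (Xᵀ * (Ω * Z)) l j = 0 := by rw [← Matrix.mul_assoc, h]; rfl
      simpa [Matrix.mulVec, Matrix.mul_apply, dotProduct] using this
    rw [← heq] at hmem
    obtain ⟨y, hy⟩ := hmem
    exact ⟨y, hy⟩
  choose c hc using hcol
  set A : Matrix (Fin (n - k)) (Fin (n - k)) ℝ := Matrix.of (fun l j => c j l) with hA
  have hZA : Z * A = Ω * Z := by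
    ext i j
    have := congrFun (hc j) i
    simpa [Matrix.mul_apply, Matrix.mulVec, dotProduct, hA] using this
  -- Z has injective mulVec
  have hZker : LinearMap.ker Z.mulVecLin = ⊥ := by
    have hrnZ := LinearMap.finrank_range_add_finrank_ker Z.mulVecLin
    simp only [Module.finrank_pi, Fintype.card_fin] at hrnZ
    rw [hrkZ] at hrnZ
    exact Submodule.finrank_eq_zero.mp (by omega)
  have hZinj : Function.Injective Z.mulVec := by
    have := LinearMap.ker_eq_bot.mp hZker
    simpa [Function.Injective] using this
  have hΩinj : Function.Injective Ω.mulVec :=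
    mulVec_injective_iff_isUnit.mpr hΩ.isUnit
  -- A is a unit
  have hAinj : Function.Injective A.mulVec := by
    have hker : LinearMap.ker A.mulVecLin = ⊥ := by
      rw [Submodule.eq_bot_iff]
      intro x hx
      simp only [LinearMap.mem_ker, mulVecLin_apply] at hx
      have h1 : Z.mulVec (A.mulVec x) = Ω.mulVec (Z.mulVec x) := by
        rw [mulVec_mulVec, mulVec_mulVec, hZA]
      rw [hx] at h1
      have h2 : Z.mulVec x = 0 := by
        apply hΩinj
        rw [← h1]
        simp
      have := hZinj (h2.trans (Z.mulVec_zero).symm)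
      exact this
    have := LinearMap.ker_eq_bot.mp hker
    simpa [Function.Injective] using this
  have hAunit : IsUnit A := mulVec_injective_iff_isUnit.mp hAinj
  have hΩdet : IsUnit Ω.det := (Matrix.isUnit_iff_isUnit_det Ω).mp hΩ.isUnit
  have hAdet : IsUnit A.det := (Matrix.isUnit_iff_isUnit_det A).mp hAunit
  have hinv : Ω⁻¹ * Z * A = Z := by
    rw [Matrix.mul_assoc, hZA, ← Matrix.mul_assoc, Matrix.nonsing_inv_mul Ω hΩdet,
      Matrix.one_mul]
  have hinv2 : Ω⁻¹ * Z = Z * A⁻¹ := by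
    have := congrArg (· * A⁻¹) hinv
    simpa [Matrix.mul_assoc, Matrix.mul_nonsing_inv A hAdet] using this
  rw [Matrix.mul_assoc, hinv2, ← Matrix.mul_assoc, hXZ, Matrix.zero_mul]

theorem stmt_2 (n k : ℕ) (hnk : k < n)
    (X : Matrix (Fin n) (Fin k) ℝ) (hX : X.rank = k)
    (Z : Matrix (Fin n) (Fin (n - k)) ℝ) (hXZ : Xᵀ * Z = 0) (hZ : Z.rank = n - k)
    (Ω : Matrix (Fin n) (Fin n) ℝ) (hΩ : Ω.PosDef) :
    Xᵀ * Ω * Z = 0 ↔ Xᵀ * Ω⁻¹ * Z = 0 := by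
  constructor
  · exact aux_stmt_2 n k hnk X hX Z hXZ hZ Ω hΩ
  · intro h
    have := aux_stmt_2 n k hnk X hX Z hXZ hZ Ω⁻¹ hΩ.inv h
    rwa [Matrix.nonsing_inv_nonsing_inv Ω (Matrix.isUnit_iff_isUnit_det Ω |>.mp hΩ.isUnit)] at this
end

section
/- Let X ∈ ℝ^{n×k} have rank k, K ∈ ℝ^{k×k} be positive semidefinite, and Ω ∈ ℝ^{n×n} be positive definite. If there exists a nonsingular G ∈ ℝ^{k×k} with ΩX = XG and K = KG, then the general ridge estimators coincide: (XᵀΩ⁻¹X + K)⁻¹XᵀΩ⁻¹y = (XᵀX + K)⁻¹Xᵀy for all y ∈ ℝⁿ. -/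
open Matrix

theorem stmt_5 (n k : ℕ) (X : Matrix (Fin n) (Fin k) ℝ) (hX : X.rank = k)
    (K : Matrix (Fin k) (Fin k) ℝ) (hK : K.PosSemidef)
    (Ω : Matrix (Fin n) (Fin n) ℝ) (hΩ : Ω.PosDef)
    (G : Matrix (Fin k) (Fin k) ℝ) (hG : IsUnit G)
    (hΩX : Ω * X = X * G) (hKG : K = K * G) :
    ∀ y : Fin n → ℝ,
      (Xᵀ * Ω⁻¹ * X + K)⁻¹ *ᵥ ((Xᵀ * Ω⁻¹) *ᵥ y) = (Xᵀ * X + K)⁻¹ *ᵥ (Xᵀ *ᵥ y) := by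
  intro y
  -- X has trivial kernel
  have hker : LinearMap.ker X.mulVecLin = ⊥ := by
    have h1 := LinearMap.finrank_range_add_finrank_ker X.mulVecLin
    rw [show Module.finrank ℝ (LinearMap.range X.mulVecLin) = k from hX] at h1
    simp only [Module.finrank_fin_fun] at h1
    exact Submodule.finrank_eq_zero.mp (by omega)
  have hinj : Function.Injective X.mulVecLin := LinearMap.ker_eq_bot.mp hker
  -- XᵀX is positive definite
  have hXX : (Xᵀ * X).PosDef := by
    have hps : (Xᵀ * X).PosSemidef := by
      simpa using posSemidef_conjTranspose_mul_self X
    refine posDef_iff_dotProduct_mulVec.mpr ⟨hps.1, fun x hx => ?_⟩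
    have hXx : X *ᵥ x ≠ 0 := by
      intro h
      exact hx (hinj (by simpa [X.mulVecLin_apply] using h))
    have : star x ⬝ᵥ ((Xᵀ * X) *ᵥ x) = (X *ᵥ x) ⬝ᵥ (X *ᵥ x) := by
      rw [← mulVec_mulVec, dotProduct_mulVec, show star x = x from rfl,
        vecMul_transpose]
    rw [this]
    rcases lt_or_eq_of_le (Finset.sum_nonneg fun i _ => mul_self_nonneg ((X *ᵥ x) i)) with h | h
    · exact h
    · exact absurd (dotProduct_self_eq_zero.mp h.symm) hXx
  set A := Xᵀ * X + K with hAdef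
  have hA : A.PosDef := hXX.add_posSemidef hK
  have hAdet : IsUnit A.det := (Matrix.isUnit_iff_isUnit_det A).mp hA.isUnit
  have hGdet : IsUnit G.det := (Matrix.isUnit_iff_isUnit_det G).mp hG
  have hΩdet : IsUnit Ω.det := (Matrix.isUnit_iff_isUnit_det Ω).mp hΩ.isUnit
  have hΩt : Ωᵀ = Ω := by
    have := hΩ.isHermitian
    rwa [Matrix.IsHermitian, conjTranspose_eq_transpose_of_trivial] at this
  have hKsym : Kᵀ = K := by
    have := hK.1
    rwa [Matrix.IsHermitian, conjTranspose_eq_transpose_of_trivial] at this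
  -- Ω⁻¹ X = X G⁻¹
  have h1 : Ω⁻¹ * X = X * G⁻¹ := by
    calc Ω⁻¹ * X = Ω⁻¹ * (X * G) * G⁻¹ := by
          simp [Matrix.mul_assoc, mul_nonsing_inv _ hGdet]
      _ = Ω⁻¹ * (Ω * X) * G⁻¹ := by rw [hΩX]
      _ = X * G⁻¹ := by rw [← Matrix.mul_assoc, nonsing_inv_mul _ hΩdet, Matrix.one_mul]
  -- K G⁻¹ = K
  have hK' : K * G⁻¹ = K := by
    conv_lhs => rw [hKG]
    rw [Matrix.mul_assoc, mul_nonsing_inv _ hGdet, Matrix.mul_one]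
  -- B = A G⁻¹
  have hB : Xᵀ * Ω⁻¹ * X + K = A * G⁻¹ := by
    rw [hAdef, Matrix.add_mul, hK']
    congr 1
    rw [Matrix.mul_assoc, h1, ← Matrix.mul_assoc]
  -- Xᵀ Ω⁻¹ = (Gᵀ)⁻¹ Xᵀ
  have h2 : Xᵀ * Ω⁻¹ = (Gᵀ)⁻¹ * Xᵀ := by
    have := congrArg Matrix.transpose h1
    rwa [transpose_mul, transpose_mul, transpose_nonsing_inv, transpose_nonsing_inv,
      hΩt] at this
  -- Gᵀ A = A G
  have h6 : Gᵀ * A = A * G := by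
    have hXXG : Gᵀ * (Xᵀ * X) = Xᵀ * X * G := by
      calc Gᵀ * (Xᵀ * X) = (X * G)ᵀ * X := by rw [transpose_mul, ← Matrix.mul_assoc]
        _ = (Ω * X)ᵀ * X := by rw [hΩX]
        _ = Xᵀ * Ω * X := by rw [transpose_mul, hΩt]
        _ = Xᵀ * X * G := by rw [Matrix.mul_assoc, hΩX, ← Matrix.mul_assoc]
    have hGK : Gᵀ * K = K := by
      calc Gᵀ * K = (Kᵀ * G)ᵀ := by rw [transpose_mul, transpose_transpose]
        _ = (K * G)ᵀ := by rw [hKsym]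
        _ = K := by rw [← hKG, hKsym]
    rw [hAdef, Matrix.mul_add, Matrix.add_mul, hXXG, hGK, ← hKG]
  -- G A⁻¹ = A⁻¹ Gᵀ
  have h7 : G * A⁻¹ = A⁻¹ * Gᵀ := by
    calc G * A⁻¹ = A⁻¹ * (A * G) * A⁻¹ := by
          rw [← Matrix.mul_assoc, nonsing_inv_mul _ hAdet, Matrix.one_mul]
      _ = A⁻¹ * (Gᵀ * A) * A⁻¹ := by rw [h6]
      _ = A⁻¹ * Gᵀ := by
          rw [Matrix.mul_assoc, Matrix.mul_assoc, mul_nonsing_inv _ hAdet, Matrix.mul_one]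
  have hGtdet : IsUnit (Gᵀ).det := by rwa [det_transpose]
  -- conclude
  have hmain : (Xᵀ * Ω⁻¹ * X + K)⁻¹ * (Xᵀ * Ω⁻¹) = A⁻¹ * Xᵀ := by
    rw [hB, h2, Matrix.mul_inv_rev, nonsing_inv_nonsing_inv _ hGdet, h7,
      Matrix.mul_assoc, ← Matrix.mul_assoc Gᵀ, mul_nonsing_inv _ hGtdet, Matrix.one_mul]
  rw [mulVec_mulVec, hmain, ← mulVec_mulVec]
end

section
/- Let X ∈ ℝ^{n×k} have rank k, K ∈ ℝ^{k×k}, W ∈ ℝ^{n×n}, ρ ≠ 0, and Ω = (Iₙ + ρW)(Iₙ + ρWᵀ) be positive definite. If there exist G₁, G₂ ∈ ℝ^{k×k} with WX = XG₁, WᵀX = XG₂, KG₁ = 0, and KG₂ = 0, then there exists a nonsingular G ∈ ℝ^{k×k} with ΩX = XG and KG = K. -/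
open Matrix

theorem stmt_13 (n k : ℕ) (X : Matrix (Fin n) (Fin k) ℝ) (hX : X.rank = k)
    (K : Matrix (Fin k) (Fin k) ℝ) (W : Matrix (Fin n) (Fin n) ℝ)
    (ρ : ℝ) (hρ : ρ ≠ 0)
    (Ω : Matrix (Fin n) (Fin n) ℝ)
    (hΩdef : Ω = (1 + ρ • W) * (1 + ρ • Wᵀ)) (hΩ : Ω.PosDef)
    (G₁ G₂ : Matrix (Fin k) (Fin k) ℝ)
    (hG₁ : W * X = X * G₁) (hG₂ : Wᵀ * X = X * G₂)
    (hKG₁ : K * G₁ = 0) (hKG₂ : K * G₂ = 0) :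
    ∃ G : Matrix (Fin k) (Fin k) ℝ, IsUnit G ∧ Ω * X = X * G ∧ K * G = K := by
  set G : Matrix (Fin k) (Fin k) ℝ := (1 + ρ • G₁) * (1 + ρ • G₂) with hGdef
  have e1 : (1 + ρ • W) * X = X * (1 + ρ • G₁) := by
    rw [Matrix.add_mul, Matrix.one_mul, Matrix.smul_mul, hG₁, Matrix.mul_add,
      Matrix.mul_one, Matrix.mul_smul]
  have e2 : (1 + ρ • Wᵀ) * X = X * (1 + ρ • G₂) := by
    rw [Matrix.add_mul, Matrix.one_mul, Matrix.smul_mul, hG₂, Matrix.mul_add,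
      Matrix.mul_one, Matrix.mul_smul]
  have hΩX : Ω * X = X * G := by
    rw [hΩdef, hGdef, Matrix.mul_assoc, e2, ← Matrix.mul_assoc, e1, Matrix.mul_assoc]
  have h3 : K * (1 + ρ • G₁) = K := by
    rw [mul_add, mul_one, mul_smul_comm, hKG₁, smul_zero, add_zero]
  have hKG : K * G = K := by
    rw [hGdef, ← mul_assoc, h3, mul_add, mul_one, mul_smul_comm, hKG₂, smul_zero, add_zero]
  refine ⟨G, ?_, hΩX, hKG⟩
  have hXinj : Function.Injective X.mulVec := by
    have hker : LinearMap.ker X.mulVecLin = ⊥ := by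
      have h := X.mulVecLin.finrank_range_add_finrank_ker
      rw [← Matrix.rank, hX] at h
      simp only [Module.finrank_fintype_fun_eq_card, Fintype.card_fin] at h
      have h0 : Module.finrank ℝ (LinearMap.ker X.mulVecLin) = 0 := by omega
      exact Submodule.finrank_eq_zero.mp h0
    rw [← Matrix.coe_mulVecLin]
    exact LinearMap.ker_eq_bot.mp hker
  have hΩu : IsUnit Ω := hΩ.isUnit
  rw [← Matrix.mulVec_injective_iff_isUnit]
  intro u v huv
  have h1 : Ω *ᵥ X *ᵥ u = Ω *ᵥ X *ᵥ v := by
    rw [Matrix.mulVec_mulVec u Ω X, Matrix.mulVec_mulVec v Ω X, hΩX,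
      ← Matrix.mulVec_mulVec u X G, ← Matrix.mulVec_mulVec v X G, huv]
  exact hXinj ((Matrix.mulVec_injective_iff_isUnit.mpr hΩu) h1)
end

section
/- Let X ∈ ℝ^{n×k} have rank k, K ∈ ℝ^{k×k} positive semidefinite, Ω ∈ ℝ^{n×n} positive definite. The block column-space equality C([ΩX; K]) = C([X; K]) holds if and only if C([Ω⁻¹X; K]) = C([X; K]), where [M; K] denotes the (n+k)×k matrix obtained by stacking M on top of K. -/
open Matrix

lemma aux_inj {n k : ℕ} (X : Matrix (Fin n) (Fin k) ℝ) (hX : X.rank = k)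
    (K : Matrix (Fin k) (Fin k) ℝ) :
    Function.Injective (Matrix.fromRows X K).mulVecLin := by
  have hXinj : Function.Injective X.mulVecLin := by
    rw [← LinearMap.ker_eq_bot]
    have h1 := X.mulVecLin.finrank_range_add_finrank_ker
    rw [show Module.finrank ℝ (LinearMap.range X.mulVecLin) = k from hX] at h1
    simp only [Module.finrank_fintype_fun_eq_card, Fintype.card_fin] at h1
    have : Module.finrank ℝ (LinearMap.ker X.mulVecLin) = 0 := by omega
    exact Submodule.finrank_eq_zero.mp this
  intro u v huv
  apply hXinj
  have := congrArg (fun f => f ∘ Sum.inl) huv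
  simp only [mulVecLin_apply, fromRows_mulVec] at huv
  have : X.mulVec u = X.mulVec v := by
    funext i
    exact congrFun huv (Sum.inl i)
  simpa [mulVecLin_apply] using this

lemma aux_dir {n k : ℕ} (X : Matrix (Fin n) (Fin k) ℝ) (hX : X.rank = k)
    (K : Matrix (Fin k) (Fin k) ℝ)
    (Ω : Matrix (Fin n) (Fin n) ℝ) (hΩ : Ω.PosDef)
    (h : LinearMap.range (Matrix.fromRows (Ω * X) K).mulVecLin =
        LinearMap.range (Matrix.fromRows X K).mulVecLin) :
    LinearMap.range (Matrix.fromRows (Ω⁻¹ * X) K).mulVecLin =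
        LinearMap.range (Matrix.fromRows X K).mulVecLin := by
  have hBinj : Function.Injective (Matrix.fromRows X K).mulVecLin := aux_inj X hX K
  -- choose preimages for each basis vector
  have hcol : ∀ j : Fin k, ∃ g : Fin k → ℝ,
      (Matrix.fromRows (Ω * X) K).mulVec g =
        (Matrix.fromRows X K).mulVec (Pi.single j 1) := by
    intro j
    have : (Matrix.fromRows X K).mulVecLin (Pi.single j 1) ∈
        LinearMap.range (Matrix.fromRows (Ω * X) K).mulVecLin := by
      rw [h]; exact LinearMap.mem_range_self _ _
    obtain ⟨g, hg⟩ := this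
    exact ⟨g, hg⟩
  choose g hg using hcol
  set G : Matrix (Fin k) (Fin k) ℝ := Matrix.of (fun i j => g j i) with hG
  have hmul : Matrix.fromRows (Ω * X) K * G = Matrix.fromRows X K := by
    ext i j
    have := congrFun (hg j) i
    simp only [mulVec_single_one] at this
    calc (Matrix.fromRows (Ω * X) K * G) i j
        = (Matrix.fromRows (Ω * X) K).mulVec (g j) i := by
          simp [Matrix.mul_apply, Matrix.mulVec, dotProduct, hG]
      _ = (Matrix.fromRows X K).mulVec (Pi.single j 1) i := congrFun (hg j) i
      _ = Matrix.fromRows X K i j := by simp [Matrix.mulVec_single_one]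
  -- G is a unit
  have hGunit : IsUnit G := by
    rw [← Matrix.mulVec_injective_iff_isUnit]
    intro u v huv
    apply hBinj
    have : (Matrix.fromRows (Ω * X) K * G).mulVec u
        = (Matrix.fromRows (Ω * X) K * G).mulVec v := by
      rw [← Matrix.mulVec_mulVec, ← Matrix.mulVec_mulVec, huv]
    simpa [hmul, Matrix.mulVecLin_apply] using this
  -- extract blocks
  have htop : Ω * X * G = X := by
    ext i j
    have := congrFun (congrFun hmul (Sum.inl i)) j
    simpa [Matrix.fromRows_apply_inl, Matrix.mul_apply] using this
  have hbot : K * G = K := by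
    ext i j
    have := congrFun (congrFun hmul (Sum.inr i)) j
    simpa [Matrix.fromRows_apply_inr, Matrix.mul_apply] using this
  have hΩu : IsUnit Ω.det := hΩ.isUnit.map detMonoidHom
  have hXG : X * G = Ω⁻¹ * X := by
    have := congrArg (fun M => Ω⁻¹ * M) htop
    simpa [← Matrix.mul_assoc, Matrix.nonsing_inv_mul Ω hΩu] using this
  have hkey : Matrix.fromRows (Ω⁻¹ * X) K = Matrix.fromRows X K * G := by
    rw [Matrix.fromRows_mul, hXG, hbot]
  rw [hkey, Matrix.mulVecLin_mul, LinearMap.range_comp,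
    LinearMap.range_eq_top.mpr (Matrix.mulVec_surjective_iff_isUnit.mpr hGunit),
    Submodule.map_top]

theorem stmt_19 (n k : ℕ) (X : Matrix (Fin n) (Fin k) ℝ) (hX : X.rank = k)
    (K : Matrix (Fin k) (Fin k) ℝ) (hK : K.PosSemidef)
    (Ω : Matrix (Fin n) (Fin n) ℝ) (hΩ : Ω.PosDef) :
    LinearMap.range (Matrix.fromRows (Ω * X) K).mulVecLin =
        LinearMap.range (Matrix.fromRows X K).mulVecLin ↔
      LinearMap.range (Matrix.fromRows (Ω⁻¹ * X) K).mulVecLin =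
        LinearMap.range (Matrix.fromRows X K).mulVecLin := by
  constructor
  · exact aux_dir X hX K Ω hΩ
  · intro h
    have := aux_dir X hX K Ω⁻¹ hΩ.inv h
    rwa [Matrix.nonsing_inv_nonsing_inv Ω (hΩ.isUnit.map detMonoidHom)] at this
end
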